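/- For integers 1 ≤ m ≤ n and indeterminates λ, y, the identity sum_{i=m}^{n} sum_{j=m}^{i} (-1)^{n+i} [n,i] C(i,j) {j,m} λ^{i-j} y^{j} = (n!/m!) * sum_{k=0}^{m} (-1)^{m+k} C(m,k) C(λ+ky, n) holds, where C(λ+ky, n) = (λ+ky)(λ+ky-1)⋯(λ+ky-n+1)/n! is the generalized binomial coefficient as a polynomial in λ and y. -/

import Mathlib

open Finset

/-- Unsigned Stirling numbers of the first kind. -/
def stirling1 : ℕ → ℕ → ℕ
  | 0, 0 => 1
  | 0, _ + 1 => 0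
  | _ + 1, 0 => 0
  | n + 1, k + 1 => n * stirling1 n (k + 1) + stirling1 n k

/-- Stirling numbers of the second kind. -/
def stirling2 : ℕ → ℕ → ℕ
  | 0, 0 => 1
  | 0, _ + 1 => 0
  | _ + 1, 0 => 0
  | n + 1, k + 1 => (k + 1) * stirling2 n (k + 1) + stirling2 n k

/-- Generalized binomial coefficient `C(x, r) = x(x-1)⋯(x-r+1)/r!` in a ℚ-algebra. -/
noncomputable def gchoose {R : Type*} [CommRing R] [Algebra ℚ R] (x : R) (r : ℕ) : R :=
  algebraMap ℚ R ((r.factorial : ℚ)⁻¹) * ∏ i ∈ Finset.range r, (x - i)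

lemma stirling1_zero {n : ℕ} (h : 1 ≤ n) : stirling1 n 0 = 0 := by
  match n, h with
  | n+1, _ => rfl

lemma stirling1_eq_zero : ∀ {n k : ℕ}, n < k → stirling1 n k = 0
  | 0, _+1, _ => rfl
  | n+1, k+1, h => by
    have h' : n < k + 1 := Nat.lt_of_succ_lt h
    have h'' : n < k := Nat.lt_of_succ_lt_succ h
    show n * stirling1 n (k+1) + stirling1 n k = 0
    rw [stirling1_eq_zero h', stirling1_eq_zero h'']; ring

lemma lemA (n : ℕ) (x : ℚ) :
    ∏ i ∈ range n, (x - i) = ∑ i ∈ range (n+1), (-1:ℚ)^(n+i) * stirling1 n i * x^i := by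
  induction n with
  | zero => simp [stirling1]
  | succ n ih =>
    rw [prod_range_succ, ih]
    have key : ∑ i ∈ range (n+2), (-1:ℚ)^(n+1+i) * stirling1 (n+1) i * x^i
        = ∑ i ∈ range (n+1), (-1:ℚ)^(n+1+(i+1)) * stirling1 (n+1) (i+1) * x^(i+1) := by
      rw [Finset.sum_range_succ' _ (n+1)]
      simp [stirling1]
    rw [key]
    have expand : ∀ i, (-1:ℚ)^(n+1+(i+1)) * stirling1 (n+1) (i+1) * x^(i+1)
        = (-1:ℚ)^(n+i) * stirling1 n i * x^i * x
          + (n:ℚ) * ((-1:ℚ)^(n+i) * stirling1 n (i+1) * x^(i+1)) := by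
      intro i
      have : stirling1 (n+1) (i+1) = n * stirling1 n (i+1) + stirling1 n i := rfl
      rw [this]
      push_cast
      have hsgn : (-1:ℚ)^(n+1+(i+1)) = (-1:ℚ)^(n+i) := by
        rw [show n+1+(i+1) = n+i+2 by ring, pow_add]; norm_num
      rw [hsgn]; ring
    rw [Finset.sum_congr rfl (fun i _ => expand i), Finset.sum_add_distrib, ← Finset.mul_sum]
    have shift : (n:ℚ) * ∑ i ∈ range (n+1), (-1:ℚ)^(n+i) * stirling1 n (i+1) * x^(i+1)
        = (n:ℚ) * -(∑ i ∈ range (n+1), (-1:ℚ)^(n+i) * stirling1 n i * x^i) := by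
      rcases Nat.eq_zero_or_pos n with h | h
      · subst h; norm_num
      congr 1
      rw [Finset.sum_range_succ' (fun i => (-1:ℚ)^(n+i) * stirling1 n i * x^i) n]
      rw [stirling1_zero h]
      push_cast
      rw [Finset.sum_range_succ]
      have h1 : stirling1 n (n+1) = 0 := stirling1_eq_zero (Nat.lt_succ_self n)
      rw [h1]
      simp only [Nat.cast_zero, mul_zero, zero_mul, add_zero, mul_zero, mul_one]
      rw [← Finset.sum_neg_distrib]
      apply Finset.sum_congr rfl
      intro i _
      have : (-1:ℚ)^(n+(i+1)) = -(-1:ℚ)^(n+i) := by rw [← Nat.add_assoc, pow_succ]; ring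
      rw [this]; ring
    rw [shift]
    rw [← Finset.sum_mul]
    ring

lemma stirling2_eq_zero : ∀ {j m : ℕ}, j < m → stirling2 j m = 0
  | 0, _+1, _ => rfl
  | j+1, m+1, h => by
    have h' : j < m + 1 := Nat.lt_of_succ_lt h
    have h'' : j < m := Nat.lt_of_succ_lt_succ h
    show (m+1) * stirling2 j (m+1) + stirling2 j m = 0
    rw [stirling2_eq_zero h', stirling2_eq_zero h'']; ring

lemma lemB : ∀ (j m : ℕ),
    ∑ k ∈ range (m+1), (-1:ℚ)^(m+k) * m.choose k * (k:ℚ)^j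
      = m.factorial * stirling2 j m := by
  intro j
  induction j with
  | zero =>
    intro m
    rcases Nat.eq_zero_or_pos m with h | h
    · subst h; simp [stirling2]
    · rw [stirling2_eq_zero h]
      simp only [pow_zero, mul_one, Nat.cast_zero, mul_zero]
      have h2 := Int.alternating_sum_range_choose_of_ne (Nat.pos_iff_ne_zero.mp h)
      have h3 : ((∑ k ∈ range (m+1), ((-1)^k * m.choose k : ℤ) : ℤ) : ℚ) = 0 := by
        rw [h2]; norm_num
      push_cast at h3
      calc ∑ k ∈ range (m+1), (-1:ℚ)^(m+k) * m.choose k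
          = (-1:ℚ)^m * ∑ k ∈ range (m+1), (-1:ℚ)^k * m.choose k := by
            rw [Finset.mul_sum]; exact Finset.sum_congr rfl fun k _ => by rw [pow_add]; ring
        _ = 0 := by rw [h3]; ring
  | succ j ih =>
    intro m
    match m with
    | 0 => simp [stirling2]
    | m+1 =>
      set S := ∑ k ∈ range (m+1), (-1:ℚ)^(m+k) * m.choose k * ((k:ℚ)+1)^j with hS
      have step1 : ∑ k ∈ range (m+2), (-1:ℚ)^(m+1+k) * (m+1).choose k * (k:ℚ)^(j+1)
          = (m+1) * S := by
        rw [Finset.sum_range_succ' _ (m+1)]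
        simp only [Nat.cast_zero, ne_eq, Nat.succ_ne_zero, not_false_iff,
          zero_pow (Nat.succ_ne_zero j), mul_zero, add_zero]
        rw [Finset.mul_sum]
        apply Finset.sum_congr rfl
        intro k _
        have hc : ((m+1).choose (k+1) : ℚ) * (k+1) = (m+1) * (m.choose k : ℚ) := by
          have h := Nat.add_one_mul_choose_eq m k
          exact_mod_cast (congrArg (Nat.cast (R := ℚ)) h).symm
        have hsgn : (-1:ℚ)^(m+1+(k+1)) = (-1:ℚ)^(m+k) := by
          rw [show m+1+(k+1) = m+k+2 by ring, pow_add]; norm_num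
        push_cast
        rw [hsgn]
        calc (-1:ℚ)^(m+k) * (m+1).choose (k+1) * ((k:ℚ)+1)^(j+1)
            = (-1:ℚ)^(m+k) * (((m+1).choose (k+1):ℚ) * ((k:ℚ)+1)) * ((k:ℚ)+1)^j := by ring
          _ = (m+1) * ((-1:ℚ)^(m+k) * m.choose k * ((k:ℚ)+1)^j) := by rw [hc]; ring
      have sum1 : ∑ k ∈ range (m+2), (-1:ℚ)^(m+1+k) * (m+1).choose k * (k:ℚ)^j
          = (-1:ℚ)^(m+1) * (0:ℚ)^j + S
            + ∑ k ∈ range (m+1), (-1:ℚ)^(m+k) * m.choose (k+1) * ((k:ℚ)+1)^j := by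
        rw [Finset.sum_range_succ' _ (m+1)]
        simp only [Nat.cast_zero, Nat.choose_zero_right, Nat.cast_one, mul_one]
        have : ∀ k, (-1:ℚ)^(m+1+(k+1)) * ((m+1).choose (k+1):ℚ) * ((k:ℚ)+1)^j
            = (-1:ℚ)^(m+k) * m.choose k * ((k:ℚ)+1)^j
              + (-1:ℚ)^(m+k) * m.choose (k+1) * ((k:ℚ)+1)^j := by
          intro k
          have hsgn : (-1:ℚ)^(m+1+(k+1)) = (-1:ℚ)^(m+k) := by
            rw [show m+1+(k+1) = m+k+2 by ring, pow_add]; norm_num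
          rw [hsgn, Nat.choose_succ_succ]
          push_cast
          ring
        rw [Finset.sum_congr rfl (fun k _ => by push_cast; exact this k),
          Finset.sum_add_distrib]
        ring
      have sum2 : ∑ k ∈ range (m+1), (-1:ℚ)^(m+k) * m.choose k * (k:ℚ)^j
          = (-1:ℚ)^m * (0:ℚ)^j
            - ∑ k ∈ range (m+1), (-1:ℚ)^(m+k) * m.choose (k+1) * ((k:ℚ)+1)^j := by
        have htop : ∑ k ∈ range (m+2), (-1:ℚ)^(m+k) * m.choose k * (k:ℚ)^j
            = ∑ k ∈ range (m+1), (-1:ℚ)^(m+k) * m.choose k * (k:ℚ)^j := by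
          rw [Finset.sum_range_succ, Nat.choose_succ_self]
          norm_num
        rw [← htop, Finset.sum_range_succ' _ (m+1)]
        have : ∀ k, (-1:ℚ)^(m+(k+1)) * (m.choose (k+1):ℚ) * ((k:ℚ)+1)^j
            = -((-1:ℚ)^(m+k) * m.choose (k+1) * ((k:ℚ)+1)^j) := by
          intro k
          rw [show m+(k+1) = m+k+1 by ring, pow_succ]
          ring
        rw [Finset.sum_congr rfl (fun k _ => by push_cast; exact this k), Finset.sum_neg_distrib]
        simp only [Nat.cast_zero, Nat.choose_zero_right, Nat.cast_one, mul_one]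
        ring
      have hsgn2 : (-1:ℚ)^(m+1) * (0:ℚ)^j + (-1:ℚ)^m * (0:ℚ)^j = 0 := by
        rw [pow_succ]; ring
      have key : S = (m+1).factorial * stirling2 j (m+1) + (m.factorial : ℚ) * stirling2 j m := by
        have h1 := ih (m+1)
        have h2 := ih m
        rw [sum2] at h2
        rw [sum1] at h1
        have : S = ((m+1).factorial : ℚ) * stirling2 j (m+1) - (-1:ℚ)^(m+1) * (0:ℚ)^j
            - ∑ k ∈ range (m+1), (-1:ℚ)^(m+k) * m.choose (k+1) * ((k:ℚ)+1)^j := by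
          linarith [h1]
        rw [this]
        have h2' : ∑ k ∈ range (m+1), (-1:ℚ)^(m+k) * m.choose (k+1) * ((k:ℚ)+1)^j
            = (-1:ℚ)^m * (0:ℚ)^j - (m.factorial : ℚ) * stirling2 j m := by linarith [h2]
        rw [h2']
        linarith [hsgn2]
      rw [step1, key]
      have hs2 : stirling2 (j+1) (m+1) = (m+1) * stirling2 j (m+1) + stirling2 j m := rfl
      rw [hs2]
      have hf : ((m+1).factorial : ℚ) = (m+1) * m.factorial := by
        rw [Nat.factorial_succ]; push_cast; ring
      push_cast [hf]
      ring

theorem stmt4 (m n : ℕ) (hm : 1 ≤ m) (hmn : m ≤ n) (l y : ℚ) :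
    ∑ i ∈ Finset.Icc m n, ∑ j ∈ Finset.Icc m i,
        (-1 : ℚ) ^ (n + i) * stirling1 n i * i.choose j * stirling2 j m * l ^ (i - j) * y ^ j =
      (n.factorial : ℚ) / m.factorial *
        ∑ k ∈ Finset.range (m + 1),
          (-1 : ℚ) ^ (m + k) * m.choose k * gchoose (l + k * y) n := by
  have hmf : (m.factorial : ℚ) ≠ 0 := Nat.cast_ne_zero.mpr m.factorial_ne_zero
  have hnf : (n.factorial : ℚ) ≠ 0 := Nat.cast_ne_zero.mpr n.factorial_ne_zero
  set T : ℕ → ℕ → ℚ := fun i j =>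
    (-1 : ℚ) ^ (n + i) * stirling1 n i * i.choose j * stirling2 j m * l ^ (i - j) * y ^ j
    with hT
  -- inner sum for each k
  have hk : ∀ i : ℕ, ∑ k ∈ range (m+1), (-1:ℚ)^(m+k) * m.choose k * (l + (k:ℚ)*y)^i
      = (m.factorial : ℚ) *
        ∑ j ∈ range (i+1), (stirling2 j m : ℚ) * i.choose j * l^(i-j) * y^j := by
    intro i
    have hexp : ∀ k : ℕ, (l + (k:ℚ)*y)^i
        = ∑ j ∈ range (i+1), ((k:ℚ)*y)^j * l^(i-j) * i.choose j := by
      intro k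
      rw [add_comm l ((k:ℚ)*y), add_pow]
    calc ∑ k ∈ range (m+1), (-1:ℚ)^(m+k) * m.choose k * (l + (k:ℚ)*y)^i
        = ∑ k ∈ range (m+1), ∑ j ∈ range (i+1),
            ((-1:ℚ)^(m+k) * m.choose k * (k:ℚ)^j) * (y^j * l^(i-j) * i.choose j) := by
          apply Finset.sum_congr rfl
          intro k _
          rw [hexp k, Finset.mul_sum]
          apply Finset.sum_congr rfl
          intro j _
          rw [mul_pow]
          ring
      _ = ∑ j ∈ range (i+1), (∑ k ∈ range (m+1), (-1:ℚ)^(m+k) * m.choose k * (k:ℚ)^j)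
            * (y^j * l^(i-j) * i.choose j) := by
          rw [Finset.sum_comm]
          exact Finset.sum_congr rfl fun j _ => (Finset.sum_mul _ _ _).symm
      _ = (m.factorial : ℚ) *
            ∑ j ∈ range (i+1), (stirling2 j m : ℚ) * i.choose j * l^(i-j) * y^j := by
          rw [Finset.mul_sum]
          apply Finset.sum_congr rfl
          intro j _
          rw [lemB j m]
          ring
  -- rewrite the RHS
  have hRHS : (n.factorial : ℚ) / m.factorial *
        ∑ k ∈ Finset.range (m + 1),
          (-1 : ℚ) ^ (m + k) * m.choose k * gchoose (l + k * y) n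
      = ∑ i ∈ range (n+1), ∑ j ∈ range (i+1), T i j := by
    have hg : ∀ k : ℕ, gchoose (l + (k:ℚ) * y) n
        = (n.factorial : ℚ)⁻¹ * ∑ i ∈ range (n+1), (-1:ℚ)^(n+i) * stirling1 n i * (l + (k:ℚ)*y)^i := by
      intro k
      rw [gchoose, lemA]
      norm_num
    calc (n.factorial : ℚ) / m.factorial *
          ∑ k ∈ Finset.range (m + 1), (-1 : ℚ) ^ (m + k) * m.choose k * gchoose (l + k * y) n
        = (n.factorial : ℚ) / m.factorial * (n.factorial : ℚ)⁻¹ *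
            ∑ k ∈ range (m+1), ∑ i ∈ range (n+1),
              (-1:ℚ)^(n+i) * stirling1 n i * ((-1:ℚ)^(m+k) * m.choose k * (l + (k:ℚ)*y)^i) := by
          rw [mul_assoc]
          congr 1
          rw [Finset.mul_sum]
          apply Finset.sum_congr rfl
          intro k _
          rw [hg k, mul_left_comm, Finset.mul_sum]
          congr 1
          apply Finset.sum_congr rfl
          intro i _
          ring
      _ = (n.factorial : ℚ) / m.factorial * (n.factorial : ℚ)⁻¹ *
            ∑ i ∈ range (n+1), (-1:ℚ)^(n+i) * stirling1 n i *
              ((m.factorial : ℚ) * ∑ j ∈ range (i+1), (stirling2 j m : ℚ) * i.choose j * l^(i-j) * y^j) := by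
          rw [Finset.sum_comm]
          congr 1
          apply Finset.sum_congr rfl
          intro i _
          rw [← hk i, Finset.mul_sum]
      _ = ∑ i ∈ range (n+1), ∑ j ∈ range (i+1), T i j := by
          rw [div_eq_mul_inv, mul_comm ((n.factorial:ℚ)) ((m.factorial:ℚ))⁻¹,
            mul_assoc ((m.factorial:ℚ))⁻¹ (n.factorial:ℚ),
            mul_inv_cancel₀ hnf, mul_one, Finset.mul_sum]
          apply Finset.sum_congr rfl
          intro i _
          simp only [Finset.mul_sum]
          apply Finset.sum_congr rfl
          intro j _
          rw [hT]
          field_simp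
  rw [hRHS]
  -- extend LHS from Icc to range
  have inner : ∀ i ∈ Finset.Icc m n, ∑ j ∈ Finset.Icc m i, T i j = ∑ j ∈ range (i+1), T i j := by
    intro i hi
    apply Finset.sum_subset
    · intro j hj
      rw [Finset.mem_Icc] at hj
      exact Finset.mem_range.mpr (Nat.lt_succ_of_le hj.2)
    · intro j hj hj'
      rw [Finset.mem_range] at hj
      rw [Finset.mem_Icc] at hj'
      push_neg at hj'
      have hjm : j < m := by
        by_contra h
        exact absurd (hj' (le_of_not_gt h)) (not_lt.mpr (Nat.lt_succ_iff.mp hj))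
      rw [hT]
      simp [stirling2_eq_zero hjm]
  rw [Finset.sum_congr rfl inner]
  apply Finset.sum_subset
  · intro i hi
    rw [Finset.mem_Icc] at hi
    exact Finset.mem_range.mpr (Nat.lt_succ_of_le hi.2)
  · intro i hi hi'
    rw [Finset.mem_range, Nat.lt_succ_iff] at hi
    rw [Finset.mem_Icc] at hi'
    push_neg at hi'
    have him : i < m := by
      by_contra h
      exact absurd (hi' (le_of_not_gt h)) (not_lt.mpr hi)
    apply Finset.sum_eq_zero
    intro j hj
    rw [Finset.mem_range, Nat.lt_succ_iff] at hj
    have : j < m := lt_of_le_of_lt hj him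
    rw [hT]
    simp [stirling2_eq_zero this]
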